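/- Rank-one locally minimal dilation does not imply minimal dilation with respect to general variations with fixed boundary values. Concretely, let Ω = {x ∈ ℝ² : 0 < |x| < 1}, fix γ > 0, and set u^γ(x) = |x|^γ·x. Then: (a) u^γ agrees with the identity map on ∂Ω (u^γ(x) = x for |x| = 1, and u^γ extends continuously to 0 by the value 0); (b) u^γ has rank-one locally minimal dilation on Ω; and (c) sup_{x∈Ω} K(D id(x)) = 2 < 2 + γ²/(γ+1) = sup_{x∈Ω} K(Du^γ(x)), so the identity map, which has the same boundary values, has strictly smaller supremal dilation than u^γ. This disproves that rank-one locally minimal dilation implies minimality among all maps with the same boundary values. -/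

import Mathlib

open Matrix Filter Topology

/-- The dilation function `K(P) = |P|² / det(PᵀP)^(1/n)`, where `|P|² = tr(PᵀP)`. -/
noncomputable def dil {N n : ℕ} (P : Matrix (Fin N) (Fin n) ℝ) : ℝ :=
  (Pᵀ * P).trace / (Pᵀ * P).det ^ ((1 : ℝ) / n)

/-- The Jacobian matrix of a map `u : ℝ² → ℝ²`. -/
noncomputable def jac (u : EuclideanSpace ℝ (Fin 2) → EuclideanSpace ℝ (Fin 2))
    (x : EuclideanSpace ℝ (Fin 2)) : Matrix (Fin 2) (Fin 2) ℝ :=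
  Matrix.of fun α i => fderiv ℝ u x (EuclideanSpace.single i 1) α

/-- `u` has Rank-One Locally Minimal Dilation on `Ω`: for every closed ball `B̄ ⊆ Ω`, every
`C¹` function `f` with compact support in the open ball `B` and every unit vector `ξ ∈ ℝ²`
such that `u + fξ` is an immersion on `B`, `sup_B K(Du) ≤ sup_B K(D(u + fξ))`. -/
def RankOneLocMinDil (Ω : Set (EuclideanSpace ℝ (Fin 2)))
    (u : EuclideanSpace ℝ (Fin 2) → EuclideanSpace ℝ (Fin 2)) : Prop :=
  ∀ (x₀ : EuclideanSpace ℝ (Fin 2)) (r : ℝ), 0 < r → Metric.closedBall x₀ r ⊆ Ω →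
    ∀ f : EuclideanSpace ℝ (Fin 2) → ℝ, ContDiff ℝ 1 f →
      tsupport f ⊆ Metric.ball x₀ r →
    ∀ ξ : EuclideanSpace ℝ (Fin 2), ‖ξ‖ = 1 →
      (∀ x ∈ Metric.ball x₀ r,
        0 < ((jac (fun y => u y + f y • ξ) x)ᵀ * jac (fun y => u y + f y • ξ) x).det) →
      sSup ((fun x => dil (jac u x)) '' Metric.ball x₀ r)
        ≤ sSup ((fun x => dil (jac (fun y => u y + f y • ξ) x)) '' Metric.ball x₀ r)


section Aux

noncomputable abbrev E2 := EuclideanSpace ℝ (Fin 2)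

lemma hasFDerivAt_upow {γ : ℝ} {x : E2} (hx : x ≠ 0) :
    HasFDerivAt (fun y : E2 => (‖y‖ ^ γ) • y)
      ((‖x‖ ^ γ) • ContinuousLinearMap.id ℝ E2 +
        ((γ * ‖x‖ ^ (γ - 2)) • (innerSL ℝ x)).smulRight x) x := by
  have hnorm : (0:ℝ) < ‖x‖ := norm_pos_iff.mpr hx
  have hsq : HasFDerivAt (fun y : E2 => ‖y‖^2) (2 • innerSL ℝ x) x :=
    (hasStrictFDerivAt_norm_sq x).hasFDerivAt
  have hpow : HasDerivAt (fun t : ℝ => t ^ (γ/2)) ((γ/2) * (‖x‖^2) ^ (γ/2 - 1)) (‖x‖^2) :=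
    Real.hasDerivAt_rpow_const (Or.inl (by positivity))
  have key : ((‖x‖:ℝ)^2 : ℝ) ^ (γ/2-1) = ‖x‖ ^ (γ-2) := by
    rw [← Real.rpow_natCast ‖x‖ 2, ← Real.rpow_mul (norm_nonneg x),
      show ((2:ℕ):ℝ)*(γ/2-1) = γ-2 by push_cast; ring]
  have hg : HasFDerivAt (fun y : E2 => ‖y‖ ^ γ) ((γ * ‖x‖ ^ (γ - 2)) • innerSL ℝ x) x := by
    have h1 := hpow.comp_hasFDerivAt x hsq
    have he : (fun y : E2 => (‖y‖^2 : ℝ) ^ (γ/2)) = fun y : E2 => ‖y‖ ^ γ := by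
      funext y
      rw [← Real.rpow_natCast ‖y‖ 2, ← Real.rpow_mul (norm_nonneg y),
        show ((2:ℕ):ℝ)*(γ/2) = γ by push_cast; ring]
    have hC : ((γ/2) * (‖x‖^2 : ℝ) ^ (γ/2-1)) • (2 • innerSL ℝ x)
        = (γ * ‖x‖ ^ (γ - 2)) • innerSL ℝ x := by
      ext y
      simp only [ContinuousLinearMap.smul_apply, smul_eq_mul, key]
      push_cast
      ring
    rw [← he, ← hC]
    exact h1
  have := hg.smul (hasFDerivAt_id x)
  simp at this
  exact this


lemma jac_apply_of_hasFDerivAt {v : E2 → E2} {L : E2 →L[ℝ] E2} {x : E2}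
    (hv : HasFDerivAt v L x) (α i : Fin 2) :
    jac v x α i = L (EuclideanSpace.single i 1) α := by
  rw [jac, Matrix.of_apply, hv.fderiv]

lemma dil_fin_two (M : Matrix (Fin 2) (Fin 2) ℝ) :
    dil M = (M 0 0^2 + M 0 1^2 + M 1 0^2 + M 1 1^2) / |M.det| := by
  rw [dil]
  congr 1
  · simp [Matrix.trace_fin_two, Matrix.mul_apply, Fin.sum_univ_two, Matrix.transpose_apply]
    ring
  · rw [Matrix.det_mul, Matrix.det_transpose, ← sq,
      show ((1:ℝ)/((2:ℕ):ℝ)) = 1/(2:ℝ) by norm_num,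
      ← Real.sqrt_eq_rpow, Real.sqrt_sq_eq_abs]

lemma norm_sq_coords (x : E2) : ‖x‖^2 = x 0^2 + x 1^2 := by
  rw [EuclideanSpace.norm_eq, Real.sq_sqrt (by positivity)]
  simp [Fin.sum_univ_two, Real.norm_eq_abs, sq_abs]

lemma jac_u_apply {γ : ℝ} {x : E2} (hx : x ≠ 0) (α i : Fin 2) :
    jac (fun y : E2 => (‖y‖ ^ γ) • y) x α i
      = ‖x‖^γ * (if α = i then 1 else 0) + (γ * ‖x‖^(γ-2)) * (x i * x α) := by
  rw [jac_apply_of_hasFDerivAt (hasFDerivAt_upow hx)]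
  fin_cases i <;> fin_cases α <;>
    simp [ContinuousLinearMap.smulRight_apply, EuclideanSpace.single_apply,
      PiLp.add_apply, PiLp.smul_apply, EuclideanSpace.inner_single_right, smul_eq_mul] <;>
    ring

lemma bs_eq {γ : ℝ} {x : E2} (hx : x ≠ 0) :
    (γ * ‖x‖^(γ-2)) * (x 0^2 + x 1^2) = γ * ‖x‖^γ := by
  have hnorm : (0:ℝ) < ‖x‖ := norm_pos_iff.mpr hx
  rw [← norm_sq_coords, ← Real.rpow_natCast ‖x‖ 2, mul_assoc, ← Real.rpow_add hnorm,
    show γ - 2 + ((2:ℕ):ℝ) = γ by push_cast; ring]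

lemma det_jac_u {γ : ℝ} {x : E2} (hx : x ≠ 0) :
    (jac (fun y : E2 => (‖y‖ ^ γ) • y) x).det = (‖x‖^γ)^2 * (γ+1) := by
  rw [Matrix.det_fin_two]
  simp only [jac_u_apply hx]
  have hbs := bs_eq (γ := γ) hx
  norm_num
  linear_combination (‖x‖^γ) * hbs

lemma dil_jac_u {γ : ℝ} (hγ : 0 < γ) {x : E2} (hx : x ≠ 0) :
    dil (jac (fun y : E2 => (‖y‖ ^ γ) • y) x) = 2 + γ^2/(γ+1) := by
  have hnorm : (0:ℝ) < ‖x‖ := norm_pos_iff.mpr hx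
  have ha : (0:ℝ) < ‖x‖^γ := Real.rpow_pos_of_pos hnorm γ
  have hbs := bs_eq (γ := γ) hx
  rw [dil_fin_two, det_jac_u hx, abs_of_pos (by positivity)]
  simp only [jac_u_apply hx]
  norm_num
  have hsum : (‖x‖^γ + (γ * ‖x‖^(γ-2)) * (x 0 * x 0))^2
      + ((γ * ‖x‖^(γ-2)) * (x 1 * x 0))^2
      + ((γ * ‖x‖^(γ-2)) * (x 0 * x 1))^2
      + (‖x‖^γ + (γ * ‖x‖^(γ-2)) * (x 1 * x 1))^2
      = (‖x‖^γ)^2 * (γ^2 + 2*γ + 2) := by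
    linear_combination (2*‖x‖^γ + (γ * ‖x‖^(γ-2)) * (x 0^2 + x 1^2) + γ*‖x‖^γ) * hbs
  rw [hsum]
  have h1 : γ + 1 ≠ 0 := by linarith
  field_simp
  ring

lemma dil_jac_id (x : E2) : dil (jac (fun y : E2 => y) x) = 2 := by
  have h : HasFDerivAt (fun y : E2 => y) (ContinuousLinearMap.id ℝ E2) x := hasFDerivAt_id x
  rw [dil_fin_two, Matrix.det_fin_two]
  simp only [jac_apply_of_hasFDerivAt h, ContinuousLinearMap.id_apply,
    EuclideanSpace.single_apply]
  norm_num

lemma jac_v_apply {γ : ℝ} {x : E2} (hx : x ≠ 0) {f : E2 → ℝ} (hf : ContDiff ℝ 1 f)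
    (ξ : E2) (α i : Fin 2) :
    jac (fun y : E2 => (‖y‖ ^ γ) • y + f y • ξ) x α i
      = ‖x‖^γ * (if α = i then 1 else 0) + (γ * ‖x‖^(γ-2)) * (x i * x α)
        + fderiv ℝ f x (EuclideanSpace.single i 1) * ξ α := by
  have h2 : HasFDerivAt (fun y : E2 => f y • ξ) ((fderiv ℝ f x).smulRight ξ) x :=
    ((hf.differentiable one_ne_zero) x).hasFDerivAt.smul_const ξ
  rw [jac_apply_of_hasFDerivAt (v := fun y : E2 => (‖y‖ ^ γ) • y + f y • ξ) ((hasFDerivAt_upow hx).add h2)]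
  fin_cases i <;> fin_cases α <;>
    simp [ContinuousLinearMap.smulRight_apply, EuclideanSpace.single_apply,
      PiLp.add_apply, PiLp.smul_apply, EuclideanSpace.inner_single_right, smul_eq_mul] <;>
    ring

lemma coord_continuous (j : Fin 2) : Continuous fun x : E2 => x j :=
  (EuclideanSpace.proj (𝕜 := ℝ) j).continuous

lemma contOn_dil_v {γ : ℝ} {f : E2 → ℝ} {ξ : E2} (hf : ContDiff ℝ 1 f)
    {s : Set E2} (hs : ∀ x ∈ s, x ≠ (0:E2))
    (hd : ∀ x ∈ s, (jac (fun y : E2 => (‖y‖ ^ γ) • y + f y • ξ) x).det ≠ 0) :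
    ContinuousOn (fun x => dil (jac (fun y : E2 => (‖y‖ ^ γ) • y + f y • ξ) x)) s := by
  set v := fun y : E2 => (‖y‖ ^ γ) • y + f y • ξ with hv
  have hrp : ∀ (p : ℝ), ContinuousOn (fun x : E2 => ‖x‖ ^ p) s := fun p =>
    (continuous_norm.continuousOn).rpow_const
      (fun x hx => Or.inl (norm_ne_zero_iff.mpr (hs x hx)))
  have hent : ∀ α i : Fin 2, ContinuousOn (fun x => jac v x α i) s := by
    intro α i
    apply ContinuousOn.congr (f := fun x : E2 =>
      ‖x‖^γ * (if α = i then 1 else 0) + (γ * ‖x‖^(γ-2)) * (x i * x α)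
        + fderiv ℝ f x (EuclideanSpace.single i 1) * ξ α)
    · apply ContinuousOn.add
      apply ContinuousOn.add
      · exact (hrp γ).mul continuousOn_const
      · exact (continuousOn_const.mul (hrp (γ-2))).mul
          (((coord_continuous i).mul (coord_continuous α)).continuousOn)
      · exact ((((hf.continuous_fderiv one_ne_zero).clm_apply continuous_const).mul
          continuous_const)).continuousOn
    · intro x hx
      exact jac_v_apply (hs x hx) hf ξ α i
  have hD : ContinuousOn (fun x => (jac v x).det) s := by
    have : (fun x => (jac v x).det)
        = fun x => jac v x 0 0 * jac v x 1 1 - jac v x 0 1 * jac v x 1 0 := by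
      funext x; rw [Matrix.det_fin_two]
    rw [this]
    exact ((hent 0 0).mul (hent 1 1)).sub ((hent 0 1).mul (hent 1 0))
  have hS : ContinuousOn
      (fun x => jac v x 0 0^2 + jac v x 0 1^2 + jac v x 1 0^2 + jac v x 1 1^2) s :=
    ((((hent 0 0).pow 2).add ((hent 0 1).pow 2)).add ((hent 1 0).pow 2)).add ((hent 1 1).pow 2)
  exact ContinuousOn.congr (hS.div hD.abs fun x hx => abs_ne_zero.mpr (hd x hx))
    (fun x _ => dil_fin_two _)


lemma aux_b (γ : ℝ) (hγ : 0 < γ) :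
    ∀ (x₀ : E2) (r : ℝ), 0 < r →
      Metric.closedBall x₀ r ⊆ {x : E2 | 0 < ‖x‖ ∧ ‖x‖ < 1} →
    ∀ f : E2 → ℝ, ContDiff ℝ 1 f → tsupport f ⊆ Metric.ball x₀ r →
    ∀ ξ : E2, ‖ξ‖ = 1 →
      (∀ x ∈ Metric.ball x₀ r,
        0 < ((jac (fun y => (fun x : E2 => (‖x‖^γ) • x) y + f y • ξ) x)ᵀ *
          jac (fun y => (fun x : E2 => (‖x‖^γ) • x) y + f y • ξ) x).det) →
      sSup ((fun x => dil (jac (fun x : E2 => (‖x‖^γ) • x) x)) '' Metric.ball x₀ r)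
        ≤ sSup ((fun x => dil (jac (fun y => (fun x : E2 => (‖x‖^γ) • x) y + f y • ξ) x))
            '' Metric.ball x₀ r) := by
  intro x₀ r hr hsub f hf hsupp ξ hξ hdet
  have hγ1 : γ + 1 ≠ 0 := by linarith
  have hq : (0:ℝ) < γ^2/(γ+1) := by positivity
  have hne : ∀ x ∈ Metric.closedBall x₀ r, x ≠ (0:E2) := fun x hx =>
    norm_pos_iff.mp (hsub hx).1
  have hvdet : ∀ x ∈ Metric.closedBall x₀ r,
      (jac (fun y : E2 => (‖y‖^γ) • y + f y • ξ) x).det ≠ 0 := by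
    intro x hx
    by_cases hxb : x ∈ Metric.ball x₀ r
    · have h2 := hdet x hxb
      rw [Matrix.det_mul, Matrix.det_transpose, ← sq] at h2
      exact fun h0 => by simp [h0] at h2
    · have hxs : x ∉ tsupport f := fun hmem => hxb (hsupp hmem)
      have heq : (fun y : E2 => (‖y‖^γ) • y + f y • ξ) =ᶠ[𝓝 x]
          (fun y : E2 => (‖y‖^γ) • y) := by
        filter_upwards [(isClosed_tsupport f).isOpen_compl.mem_nhds hxs] with y hy
        simp [image_eq_zero_of_notMem_tsupport hy]
      have hj : jac (fun y : E2 => (‖y‖^γ) • y + f y • ξ) x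
          = jac (fun y : E2 => (‖y‖^γ) • y) x := by
        ext α i; simp only [jac, Matrix.of_apply]; rw [heq.fderiv_eq]
      rw [hj, det_jac_u (hne x hx)]
      have hpos := Real.rpow_pos_of_pos (norm_pos_iff.mpr (hne x hx)) γ
      exact mul_ne_zero (pow_ne_zero 2 (ne_of_gt hpos)) hγ1
  have hkon : ∀ x ∈ Metric.ball x₀ r,
      dil (jac (fun y : E2 => (‖y‖^γ) • y) x) = 2 + γ^2/(γ+1) :=
    fun x hx => dil_jac_u hγ (hne x (Metric.ball_subset_closedBall hx))
  have hL : sSup ((fun x => dil (jac (fun y : E2 => (‖y‖^γ) • y) x)) '' Metric.ball x₀ r)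
      ≤ 2 + γ^2/(γ+1) :=
    Real.sSup_le (by rintro y ⟨x, hx, rfl⟩; exact (hkon x hx).le) (by linarith)
  have hopen : IsOpen (tsupport f)ᶜ := (isClosed_tsupport f).isOpen_compl
  obtain ⟨x₁, hx₁c, hx₁b⟩ : ∃ x₁, x₁ ∈ (tsupport f)ᶜ ∧ x₁ ∈ Metric.ball x₀ r := by
    have hdist : dist (x₀ + r • EuclideanSpace.single 0 (1:ℝ)) x₀ = r := by
      rw [dist_eq_norm, add_sub_cancel_left, norm_smul, EuclideanSpace.norm_single]
      simp [abs_of_pos hr]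
    have hpc : (x₀ + r • EuclideanSpace.single 0 (1:ℝ)) ∈ closure (Metric.ball x₀ r) := by
      rw [closure_ball x₀ (ne_of_gt hr)]
      rw [Metric.mem_closedBall, hdist]
    have hpO : (x₀ + r • EuclideanSpace.single 0 (1:ℝ)) ∈ (tsupport f)ᶜ := by
      intro hmem
      have := hsupp hmem
      rw [Metric.mem_ball, hdist] at this
      exact lt_irrefl r this
    obtain ⟨x₁, hx₁O, hx₁b⟩ := _root_.mem_closure_iff.mp hpc _ hopen hpO
    exact ⟨x₁, hx₁O, hx₁b⟩
  have hveq : (fun y : E2 => (‖y‖^γ) • y + f y • ξ) =ᶠ[𝓝 x₁]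
      (fun y : E2 => (‖y‖^γ) • y) := by
    filter_upwards [hopen.mem_nhds hx₁c] with y hy
    simp [image_eq_zero_of_notMem_tsupport hy]
  have hvx₁ : dil (jac (fun y : E2 => (‖y‖^γ) • y + f y • ξ) x₁) = 2 + γ^2/(γ+1) := by
    have hj : jac (fun y : E2 => (‖y‖^γ) • y + f y • ξ) x₁
        = jac (fun y : E2 => (‖y‖^γ) • y) x₁ := by
      ext α i; simp only [jac, Matrix.of_apply]; rw [hveq.fderiv_eq]
    rw [hj]; exact hkon x₁ hx₁b
  have hcont := contOn_dil_v (γ := γ) (ξ := ξ) hf hne hvdet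
  have hbdd : BddAbove ((fun x => dil (jac (fun y : E2 => (‖y‖^γ) • y + f y • ξ) x))
      '' Metric.ball x₀ r) :=
    BddAbove.mono (Set.image_mono Metric.ball_subset_closedBall)
      ((isCompact_closedBall x₀ r).bddAbove_image hcont)
  exact hL.trans (le_csSup hbdd ⟨x₁, hx₁b, hvx₁⟩)

end Aux

/-- on the punctured disc `Ω = {0 < |x| < 1} ⊆ ℝ²` and for `γ > 0`, the map
`u^γ(x) = |x|^γ x` (a) agrees with the identity on `∂Ω` (it equals `x` for `|x| = 1` and
tends to `0` at `0`); (b) has rank-one locally minimal dilation on `Ω`; and yet (c) its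
supremal dilation `2 + γ²/(γ+1)` is strictly larger than that of the identity map, which is
`2`. Hence rank-one locally minimal dilation does not imply minimality of the supremal
dilation among maps with the same boundary values. -/
theorem rankOne_min_strictly_weaker (γ : ℝ) (hγ : 0 < γ) :
    (∀ x : EuclideanSpace ℝ (Fin 2), ‖x‖ = 1 →
        (‖x‖ ^ γ) • x = x) ∧
    Tendsto (fun x : EuclideanSpace ℝ (Fin 2) => (‖x‖ ^ γ) • x)
      (𝓝[{(0 : EuclideanSpace ℝ (Fin 2))}ᶜ] 0) (𝓝 0) ∧
    RankOneLocMinDil {x : EuclideanSpace ℝ (Fin 2) | 0 < ‖x‖ ∧ ‖x‖ < 1}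
      (fun x => (‖x‖ ^ γ) • x) ∧
    sSup ((fun x => dil (jac (fun y => y) x))
        '' {x : EuclideanSpace ℝ (Fin 2) | 0 < ‖x‖ ∧ ‖x‖ < 1}) = 2 ∧
    sSup ((fun x => dil (jac (fun y => (‖y‖ ^ γ) • y) x))
        '' {x : EuclideanSpace ℝ (Fin 2) | 0 < ‖x‖ ∧ ‖x‖ < 1}) = 2 + γ ^ 2 / (γ + 1) ∧
    (2 : ℝ) < 2 + γ ^ 2 / (γ + 1) := by

  have hq : (0:ℝ) < γ^2/(γ+1) := by positivity
  have hΩne : {x : E2 | 0 < ‖x‖ ∧ ‖x‖ < 1}.Nonempty := by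
    refine ⟨EuclideanSpace.single 0 (1/2 : ℝ), ?_, ?_⟩ <;>
      rw [EuclideanSpace.norm_single] <;> norm_num
  refine ⟨?_, ?_, ?_, ?_, ?_, by linarith⟩
  · intro x hx; rw [hx, Real.one_rpow, one_smul]
  · have h1 : Tendsto (fun x : E2 => ‖x‖^γ) (𝓝 0) (𝓝 0) := by
      have h2 : ContinuousAt (fun t : ℝ => t^γ) 0 :=
        Real.continuousAt_rpow_const 0 γ (Or.inr hγ.le)
      have h0 : Tendsto (fun a : E2 => ‖a‖) (𝓝 0) (𝓝 (0:ℝ)) := by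
        simpa using continuous_norm.tendsto (0:E2)
      have h3 := h2.tendsto.comp h0
      simpa [Function.comp_def, Real.zero_rpow (ne_of_gt hγ)] using h3
    have h4 : Tendsto (fun x : E2 => (‖x‖^γ) • x) (𝓝 0) (𝓝 ((0:ℝ) • (0:E2))) :=
      h1.smul tendsto_id
    simpa using h4.mono_left nhdsWithin_le_nhds
  · intro x₀ r hr hsub f hf hsupp ξ hξ hdet
    exact aux_b γ hγ x₀ r hr hsub f hf hsupp ξ hξ hdet
  · rw [Set.image_congr (fun x _ => dil_jac_id x), Set.Nonempty.image_const hΩne]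
    exact csSup_singleton 2
  · rw [Set.image_congr (fun x hx => dil_jac_u hγ (norm_pos_iff.mp hx.1)),
      Set.Nonempty.image_const hΩne]
    exact csSup_singleton _
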